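/- If G is an infinite group with a normal infinite cyclic subgroup C of finite index, then G surjects onto a subgroup of finite index of D_∞; in particular G surjects onto ℤ or onto D_∞. -/

import Mathlib

private lemma exists_surj_int {H : Type*} [Group H] (f : H →* Multiplicative ℤ) (x : H)
    (hx : f x ≠ 1) :
    ∃ g : H →* Multiplicative ℤ, Function.Surjective g ∧ ∀ a b : H, f a = f b → g a = g b := by
  have htoAdd : (f x).toAdd ≠ 0 := by
    intro h; exact hx (by simpa using congrArg Multiplicative.ofAdd h)
  have hinj : Function.Injective
      (fun n : ℤ => (⟨f x ^ n, zpow_mem (MonoidHom.mem_range.mpr ⟨x, rfl⟩) n⟩ : f.range)) := by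
    intro a b hab
    have h1 : f x ^ a = f x ^ b := congrArg Subtype.val hab
    have h2 := congrArg Multiplicative.toAdd h1
    simp only [toAdd_zpow, smul_eq_mul] at h2
    exact mul_right_cancel₀ htoAdd h2
  have : Infinite f.range := Infinite.of_injective _ hinj
  obtain ⟨e⟩ : Nonempty (f.range ≃* Multiplicative ℤ) :=
    ⟨mulEquivOfCyclicCardEq (by rw [Nat.card_eq_zero_of_infinite, Nat.card_eq_zero_of_infinite])⟩
  refine ⟨e.toMonoidHom.comp f.rangeRestrict, e.surjective.comp f.rangeRestrict_surjective, ?_⟩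
  intro a b hab
  simp only [MonoidHom.comp_apply]
  congr 1
  exact Subtype.ext hab


private lemma conj_dichotomy {G : Type} [Group G] (C : Subgroup G) [hN : C.Normal]
    (ϕ : C ≃* Multiplicative ℤ) (g : G) :
    (∀ c : C, g * c * g⁻¹ = c) ∨ (∀ c : C, g * c * g⁻¹ = (↑c⁻¹ : G)) := by
  set z : C := ϕ.symm (.ofAdd 1) with hz
  have hϕz : ϕ z = .ofAdd 1 := ϕ.apply_symm_apply _
  have hgen : ∀ c : C, c = z ^ (ϕ c).toAdd := by
    intro c
    apply ϕ.injective
    rw [map_zpow, hϕz]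
    apply Multiplicative.toAdd.injective
    simp
  let w : C := ⟨g * z * g⁻¹, hN.conj_mem z z.2 g⟩
  have hwc : (w : G) = g * z * g⁻¹ := rfl
  have hconj : ∀ c : C, g * c * g⁻¹ = ↑(w ^ (ϕ c).toAdd) := by
    intro c
    conv_lhs => rw [hgen c]
    push_cast
    rw [← conj_zpow]
  let u : C := ⟨g⁻¹ * z * g, by simpa using hN.conj_mem z z.2 g⁻¹⟩
  have hu : g * ↑u * g⁻¹ = (z : G) := by
    show g * (g⁻¹ * ↑z * g) * g⁻¹ = (z : G)
    group
  have hzw : (z : C) = w ^ (ϕ u).toAdd := by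
    have h := (hconj u).symm.trans hu
    exact Subtype.ext h.symm
  -- derive b * a = 1 where b = toAdd (ϕ w), a = toAdd (ϕ u)
  have hw_pow : w = z ^ (ϕ w).toAdd := hgen w
  have hba : (ϕ w).toAdd * (ϕ u).toAdd = 1 := by
    have h1 : (z : C) = z ^ ((ϕ w).toAdd * (ϕ u).toAdd) := by
      rw [zpow_mul]
      conv_lhs => rw [hzw, hw_pow]
    have h2 := congrArg (fun c : C => (ϕ c).toAdd) h1
    simp only [map_zpow, hϕz, toAdd_zpow, toAdd_ofAdd, smul_eq_mul, mul_one] at h2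
    omega
  have hb : (ϕ w).toAdd = 1 ∨ (ϕ w).toAdd = -1 :=
    Int.isUnit_iff.mp (IsUnit.of_mul_eq_one _ hba)
  rcases hb with hb | hb
  · left
    intro c
    rw [hconj c]
    have hwz : w = z := by rw [hw_pow, hb, zpow_one]
    rw [hwz, ← hgen c]
  · right
    intro c
    rw [hconj c]
    have hwz : w = z⁻¹ := by rw [hw_pow, hb, zpow_neg_one]
    rw [hwz]
    congr 1
    rw [← zpow_neg_one, ← zpow_mul, mul_comm, zpow_mul, zpow_neg_one, ← hgen c]


open DihedralGroup in
private def rotHom : Multiplicative ℤ →* DihedralGroup 0 where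
  toFun x := .r x.toAdd
  map_one' := rfl
  map_mul' a b := rfl

open DihedralGroup in
private def sgnHom : DihedralGroup 0 →* Multiplicative (ZMod 2) where
  toFun x := match x with
    | .r _ => 1
    | .sr _ => Multiplicative.ofAdd 1
  map_one' := by rw [DihedralGroup.one_def]
  map_mul' a b := by
    rcases a with i | i <;> rcases b with j | j <;>
      simp [DihedralGroup.r_mul_r, DihedralGroup.r_mul_sr, DihedralGroup.sr_mul_r,
        DihedralGroup.sr_mul_sr] <;> decide

private lemma toDihedral {G : Type} [Group G] (f : G →* Multiplicative ℤ)
    (hf : Function.Surjective f) : ∃ F : G →* DihedralGroup 0, F.range.index ≠ 0 := by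
  refine ⟨rotHom.comp f, ?_⟩
  have hker : sgnHom.ker ≤ (rotHom.comp f).range := by
    intro x hx
    rcases x with i | i
    · obtain ⟨g, hg⟩ := hf (Multiplicative.ofAdd i)
      exact ⟨g, by simp [rotHom, hg]; rfl⟩
    · exfalso
      have : sgnHom (.sr i) = 1 := hx
      simp only [sgnHom, MonoidHom.coe_mk, OneHom.coe_mk] at this
      exact absurd this (by decide)
  have hdvd : (rotHom.comp f).range.index ∣ sgnHom.ker.index :=
    Subgroup.index_dvd_of_le hker
  have : sgnHom.ker.index ≠ 0 := by
    rw [Subgroup.index_ker]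
    exact Nat.card_pos.ne'
  intro h
  rw [h] at hdvd
  exact this (zero_dvd_iff.mp hdvd)



private lemma caseA {G : Type} [Group G] (C : Subgroup G) [C.Normal] (hfin : C.index ≠ 0)
    (ϕ : C ≃* Multiplicative ℤ)
    (hc : ∀ (g : G) (c : C), g * c * g⁻¹ = c) :
    ∃ f : G →* Multiplicative ℤ, Function.Surjective f := by
  haveI : C.FiniteIndex := ⟨hfin⟩
  set z : C := ϕ.symm (.ofAdd 1) with hzdef
  have hϕz : ϕ z = .ofAdd 1 := ϕ.apply_symm_apply _
  let f₀ : G →* Multiplicative ℤ := MonoidHom.transfer ϕ.toMonoidHom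
  have key : ∀ (k : ℕ) (g₀ : G), g₀⁻¹ * (z : G) ^ k * g₀ ∈ C →
      g₀⁻¹ * (z : G) ^ k * g₀ = (z : G) ^ k := by
    intro k g₀ _
    have h := hc g₀⁻¹ (z ^ k)
    push_cast at h
    simpa using h
  have h1 : f₀ (z : G) = ϕ.toMonoidHom ⟨(z : G) ^ C.index, _⟩ :=
    MonoidHom.transfer_eq_pow ϕ.toMonoidHom (z : G) key
  have h2 : (⟨(z : G) ^ C.index, MonoidHom.transfer_eq_pow_aux (z : G) key⟩ : C)
      = z ^ C.index := by
    apply Subtype.ext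
    push_cast
    rfl
  have h3 : f₀ (z : G) = Multiplicative.ofAdd (C.index : ℤ) := by
    rw [h1, h2]
    show ϕ (z ^ C.index) = _
    rw [map_pow, hϕz]
    apply Multiplicative.toAdd.injective
    simp
  have hne : f₀ (z : G) ≠ 1 := by
    rw [h3]
    intro h
    have := congrArg Multiplicative.toAdd h
    simp at this
    exact hfin (by exact_mod_cast this)
  obtain ⟨g, hg, -⟩ := exists_surj_int f₀ (z : G) hne
  exact ⟨g, hg⟩



private lemma caseB {G : Type} [Group G] (C : Subgroup G) [hCn : C.Normal] (hfin : C.index ≠ 0)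
    (ϕ : C ≃* Multiplicative ℤ) (t : G)
    (hd : ∀ g : G, (∀ c : C, g * c * g⁻¹ = c) ∨ (∀ c : C, g * c * g⁻¹ = (↑c⁻¹ : G)))
    (ht : ¬ ∀ c : C, t * c * t⁻¹ = (c : G)) :
    ∃ F : G →* DihedralGroup 0, Function.Surjective F := by
  classical
  set z : C := ϕ.symm (.ofAdd 1) with hzdef
  have hϕz : ϕ z = .ofAdd 1 := ϕ.apply_symm_apply _
  -- the centralizer subgroup N
  let N : Subgroup G :=
    { carrier := {g | ∀ c : C, g * c * g⁻¹ = (c : G)}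
      one_mem' := by intro c; simp
      mul_mem' := by
        intro a b ha hb c
        have hb' := hb c
        have ha' := ha c
        rw [show a * b * ↑c * (a * b)⁻¹ = a * (b * ↑c * b⁻¹) * a⁻¹ by group, hb', ha']
      inv_mem' := by
        intro a ha c
        rw [inv_inv]
        conv_lhs => rw [← ha c]
        group }
  have memN : ∀ g : G, g ∈ N ↔ ∀ c : C, g * c * g⁻¹ = (c : G) := fun _ => Iff.rfl
  have hinvN : ∀ g : G, g ∉ N → ∀ c : C, g * c * g⁻¹ = (↑c⁻¹ : G) := fun g hg =>
    (hd g).resolve_left hg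
  have hmul4 : ∀ a b : G, a ∉ N → b ∉ N → a * b ∈ N := by
    intro a b ha hb c
    rw [show a * b * ↑c * (a * b)⁻¹ = a * (b * ↑c * b⁻¹) * a⁻¹ by group, hinvN b hb c,
      hinvN a ha c⁻¹, inv_inv]
  have htN : t ∉ N := fun h => ht h
  have htiN : t⁻¹ ∉ N := fun h => htN (by simpa using N.inv_mem h)
  have hCN : ∀ c : C, (c : G) ∈ N := by
    intro c c'
    have hcomm : c * c' = c' * c := by
      apply ϕ.injective
      rw [map_mul, map_mul, mul_comm]
    have : (c : G) * c' = (c' : G) * c := by exact_mod_cast congrArg Subtype.val hcomm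
    rw [this]; group
  have hCle : C ≤ N := fun x hx => hCN ⟨x, hx⟩
  -- N is closed under conjugation
  have conjN : ∀ n : G, n ∈ N → ∀ a : G, a * n * a⁻¹ ∈ N := by
    intro n hn a c
    have hc' : a⁻¹ * ↑c * a ∈ C := by simpa using hCn.conj_mem _ c.2 a⁻¹
    have h1 := hn ⟨a⁻¹ * ↑c * a, hc'⟩
    simp only [Subgroup.coe_mk] at h1
    rw [show a * n * a⁻¹ * ↑c * (a * n * a⁻¹)⁻¹ = a * (n * (a⁻¹ * ↑c * a) * n⁻¹) * a⁻¹ by group,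
      h1]
    group
  have ht2 : t⁻¹ * t⁻¹ ∈ N := hmul4 _ _ htiN htiN
  -- conjugation by t⁻¹ as a hom of N
  let σ : N →* N :=
    { toFun := fun h => ⟨t⁻¹ * ↑h * t, by simpa using conjN ↑h h.2 t⁻¹⟩
      map_one' := Subtype.ext (by simp)
      map_mul' := fun a b => Subtype.ext (by push_cast; group) }
  have hσ : ∀ h : N, (σ h : G) = t⁻¹ * ↑h * t := fun _ => rfl
  -- transfer setup
  have hidx : (C.subgroupOf N).index ≠ 0 := by
    intro h
    have hdvd := Subgroup.relIndex_dvd_index_of_normal C N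
    rw [Subgroup.relIndex] at hdvd
    rw [h] at hdvd
    exact hfin (zero_dvd_iff.mp hdvd)
  haveI : (C.subgroupOf N).FiniteIndex := ⟨hidx⟩
  let ψ : (C.subgroupOf N) →* Multiplicative ℤ :=
    ϕ.toMonoidHom.comp (Subgroup.subgroupOfEquivOfLe hCle).toMonoidHom
  let f₀ : N →* Multiplicative ℤ := MonoidHom.transfer ψ
  have f₀conj : ∀ a h : N, f₀ (a * h * a⁻¹) = f₀ h := by
    intro a h
    rw [map_mul, map_mul, map_inv, mul_comm (f₀ a), mul_assoc, mul_inv_cancel, mul_one]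
  -- f₂ = f₀ / f₀ ∘ σ
  let f₂ : N →* Multiplicative ℤ :=
    { toFun := fun h => f₀ h / f₀ (σ h)
      map_one' := by simp
      map_mul' := fun a b => by simp only [map_mul]; exact mul_div_mul_comm _ _ _ _ }
  have f₂app : ∀ h : N, f₂ h = f₀ h / f₀ (σ h) := fun _ => rfl
  have hσσ : ∀ h : N, σ (σ h) = ⟨t⁻¹ * t⁻¹, ht2⟩ * h * ⟨t⁻¹ * t⁻¹, ht2⟩⁻¹ := by
    intro h
    apply Subtype.ext
    push_cast [hσ]
    simp [mul_assoc]
  have hf₂σ : ∀ h : N, f₂ (σ h) = (f₂ h)⁻¹ := by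
    intro h
    rw [f₂app, f₂app, hσσ, f₀conj, inv_div]
  -- value on z
  let z' : N := ⟨(z : G), hCN z⟩
  have hσz : σ z' = z'⁻¹ := by
    apply Subtype.ext
    have := hinvN t⁻¹ htiN z
    rw [inv_inv] at this
    rw [hσ]
    push_cast
    exact this
  have keyz : ∀ (k : ℕ) (g₀ : N), g₀⁻¹ * z' ^ k * g₀ ∈ C.subgroupOf N →
      g₀⁻¹ * z' ^ k * g₀ = z' ^ k := by
    intro k g₀ _
    apply Subtype.ext
    have h1 := N.inv_mem g₀.2 (z ^ k)
    push_cast at h1 ⊢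
    rw [show ((g₀ : G))⁻¹ * (z : G) ^ k * (g₀ : G) = (g₀ : G)⁻¹ * (z:G) ^ k * ((g₀ : G)⁻¹)⁻¹ by
      group] at *
    rw [h1]
  have hf₀z : f₀ z' = Multiplicative.ofAdd ((C.subgroupOf N).index : ℤ) := by
    have h1 : f₀ z' = ψ ⟨z' ^ (C.subgroupOf N).index, _⟩ := MonoidHom.transfer_eq_pow ψ z' keyz
    rw [h1]
    show ϕ ((Subgroup.subgroupOfEquivOfLe hCle) _) = _
    have h2 : (Subgroup.subgroupOfEquivOfLe hCle)
        ⟨z' ^ (C.subgroupOf N).index, MonoidHom.transfer_eq_pow_aux z' keyz⟩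
        = z ^ (C.subgroupOf N).index := by
      apply Subtype.ext
      show ((z' : N) ^ (C.subgroupOf N).index : N) = ((z : G)) ^ (C.subgroupOf N).index
      push_cast
      rfl
    rw [h2, map_pow, hϕz]
    apply Multiplicative.toAdd.injective
    simp
  have hf₂z : f₂ z' ≠ 1 := by
    rw [f₂app, hσz, map_inv, hf₀z]
    intro h
    have := congrArg Multiplicative.toAdd h
    simp only [div_inv_eq_mul, toAdd_mul, toAdd_ofAdd, toAdd_one] at this
    exact hidx (by omega)
  -- surjectivize
  obtain ⟨f₃, hf₃surj, hf₃comp⟩ := exists_surj_int f₂ z' hf₂z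
  have hf₃σ : ∀ h : N, f₃ (σ h) = (f₃ h)⁻¹ := by
    intro h
    have h1 : f₂ (σ h) = f₂ h⁻¹ := by rw [hf₂σ, map_inv]
    rw [hf₃comp _ _ h1, map_inv]
  have hρfix : σ ⟨t⁻¹ * t⁻¹, ht2⟩ = ⟨t⁻¹ * t⁻¹, ht2⟩ := by
    apply Subtype.ext
    rw [hσ]
    group
  have hf₃ρ : f₃ ⟨t⁻¹ * t⁻¹, ht2⟩ = 1 := by
    have h1 := hf₃σ ⟨t⁻¹ * t⁻¹, ht2⟩
    rw [hρfix] at h1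
    have h2 := congrArg Multiplicative.toAdd h1
    simp only [toAdd_inv] at h2
    apply Multiplicative.toAdd.injective
    simp only [toAdd_one]
    omega
  -- membership combinatorics
  have hmul2 : ∀ a b : G, a ∈ N → b ∉ N → a * b ∉ N := by
    intro a b ha hb h
    exact hb (by simpa using N.mul_mem (N.inv_mem ha) h)
  have hmul3 : ∀ a b : G, a ∉ N → b ∈ N → a * b ∉ N := by
    intro a b ha hb h
    exact ha (by simpa using N.mul_mem h (N.inv_mem hb))
  have hmem' : ∀ {g : G}, g ∉ N → t⁻¹ * g ∈ N := fun hg => hmul4 _ _ htiN hg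
  -- the homomorphism F
  let F : G →* DihedralGroup 0 :=
    { toFun := fun g =>
        if h : g ∈ N then DihedralGroup.r (f₃ ⟨g, h⟩).toAdd
        else DihedralGroup.sr (f₃ ⟨t⁻¹ * g, hmem' h⟩).toAdd
      map_one' := by
        beta_reduce
        rw [dif_pos N.one_mem]
        have : (⟨(1 : G), N.one_mem⟩ : N) = 1 := rfl
        rw [this, map_one]
        rfl
      map_mul' := by
        intro x y
        beta_reduce
        by_cases h₁ : x ∈ N <;> by_cases h₂ : y ∈ N
        · erw [dif_pos (N.mul_mem h₁ h₂), dif_pos h₁, dif_pos h₂, DihedralGroup.r_mul_r]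
          have : (⟨x * y, N.mul_mem h₁ h₂⟩ : N) = ⟨x, h₁⟩ * ⟨y, h₂⟩ := rfl
          rw [this, map_mul]
          rfl
        · erw [dif_neg (hmul2 x y h₁ h₂), dif_pos h₁, dif_neg h₂, DihedralGroup.r_mul_sr]
          have : (⟨t⁻¹ * (x * y), hmem' (hmul2 x y h₁ h₂)⟩ : N)
              = σ ⟨x, h₁⟩ * ⟨t⁻¹ * y, hmem' h₂⟩ := by
            apply Subtype.ext
            push_cast [hσ]
            group
          rw [this, map_mul, hf₃σ]
          congr 1
          show (-(f₃ ⟨x, h₁⟩).toAdd + (f₃ ⟨t⁻¹ * y, hmem' h₂⟩).toAdd : ℤ)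
              = (f₃ ⟨t⁻¹ * y, hmem' h₂⟩).toAdd - (f₃ ⟨x, h₁⟩).toAdd
          omega
        · erw [dif_neg (hmul3 x y h₁ h₂), dif_neg h₁, dif_pos h₂, DihedralGroup.sr_mul_r]
          have : (⟨t⁻¹ * (x * y), hmem' (hmul3 x y h₁ h₂)⟩ : N)
              = ⟨t⁻¹ * x, hmem' h₁⟩ * ⟨y, h₂⟩ := by
            apply Subtype.ext
            push_cast
            group
          rw [this, map_mul]
          rfl
        · erw [dif_pos (hmul4 x y h₁ h₂), dif_neg h₁, dif_neg h₂, DihedralGroup.sr_mul_sr]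
          have : (⟨x * y, hmul4 x y h₁ h₂⟩ : N)
              = (⟨t⁻¹ * t⁻¹, ht2⟩ : N)⁻¹ * σ ⟨t⁻¹ * x, hmem' h₁⟩ * ⟨t⁻¹ * y, hmem' h₂⟩ := by
            apply Subtype.ext
            push_cast [hσ]
            group
          have hval : f₃ ⟨x * y, hmul4 x y h₁ h₂⟩
              = (f₃ ⟨t⁻¹ * x, hmem' h₁⟩)⁻¹ * f₃ ⟨t⁻¹ * y, hmem' h₂⟩ := by
            rw [this, map_mul, map_mul, (f₃ : N →* Multiplicative ℤ).map_inv, hf₃ρ, inv_one,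
              one_mul, hf₃σ]
          rw [hval]
          congr 1
          show (-(f₃ ⟨t⁻¹ * x, hmem' h₁⟩).toAdd + (f₃ ⟨t⁻¹ * y, hmem' h₂⟩).toAdd : ℤ)
              = (f₃ ⟨t⁻¹ * y, hmem' h₂⟩).toAdd - (f₃ ⟨t⁻¹ * x, hmem' h₁⟩).toAdd
          omega }
  refine ⟨F, ?_⟩
  intro x
  rcases x with i | i
  · obtain ⟨h, hh⟩ := hf₃surj (Multiplicative.ofAdd (i : ℤ))
    refine ⟨(h : G), ?_⟩
    show (if hm : (h : G) ∈ N then _ else _) = _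
    rw [dif_pos h.2]
    have : (⟨(h : G), h.2⟩ : N) = h := rfl
    rw [this, hh]
    rfl
  · obtain ⟨h, hh⟩ := hf₃surj (Multiplicative.ofAdd (i : ℤ))
    have hg : t * (h : G) ∉ N := hmul3 _ _ htN h.2
    refine ⟨t * (h : G), ?_⟩
    show (if hm : t * (h : G) ∈ N then _ else _) = _
    rw [dif_neg hg]
    have : (⟨t⁻¹ * (t * (h : G)), hmem' hg⟩ : N) = h := by
      apply Subtype.ext
      show t⁻¹ * (t * (h : G)) = (h : G)
      group
    rw [this, hh]
    rfl


/-- If `G` is an infinite group with a normal infinite cyclic subgroup `C` of finite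
index, then `G` surjects onto a subgroup of finite index of `D_∞`; in particular `G`
surjects onto `ℤ` or onto `D_∞` (realized as `DihedralGroup 0`). -/
theorem stmt3 (G : Type) [Group G] [Infinite G] (C : Subgroup G) [C.Normal]
    (hcyc : IsCyclic C) (hinf : Infinite C) (hfin : C.index ≠ 0) :
    (∃ f : G →* DihedralGroup 0, f.range.index ≠ 0) ∧
    ((∃ f : G →* Multiplicative ℤ, Function.Surjective f) ∨
      (∃ f : G →* DihedralGroup 0, Function.Surjective f)) := by
  haveI := hcyc
  haveI := hinf
  have ϕ : C ≃* Multiplicative ℤ :=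
    mulEquivOfCyclicCardEq (by rw [Nat.card_eq_zero_of_infinite, Nat.card_eq_zero_of_infinite])
  by_cases hall : ∀ (g : G) (c : C), g * c * g⁻¹ = (c : G)
  · obtain ⟨f, hf⟩ := caseA C hfin ϕ hall
    exact ⟨toDihedral f hf, Or.inl ⟨f, hf⟩⟩
  · push_neg at hall
    obtain ⟨t, ht⟩ := hall
    have ht' : ¬ ∀ c : C, t * c * t⁻¹ = (c : G) := fun h => by
      obtain ⟨c, hc⟩ := ht; exact hc (h c)
    obtain ⟨F, hF⟩ := caseB C hfin ϕ t (fun g => conj_dichotomy C ϕ g) ht'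
    refine ⟨⟨F, ?_⟩, Or.inr ⟨F, hF⟩⟩
    rw [MonoidHom.range_eq_top_of_surjective F hF, Subgroup.index_top]
    exact one_ne_zero
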